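/- Let μ_1, …, μ_n be probability measures on [0,1] with E_{X_i ∼ μ_i}[X_i] ≥ α for all i, where α ∈ (0,1), let μ := ∏_{i=1}^n μ_i, let c ∈ ℝ^n with c ≥ 0, and let ε ∈ (0,1). Let Q(ε) = {q_0, …, q_{M+1}} be the query coordinates: q_0 = 0, q_l = ε·α·(1+ε)^{l−1} for l ∈ [M], q_{M+1} = 1, with M = ⌈log_{1+ε}((ε·α)^{−1})⌉. For a Pareto cover B = {b^1, …, b^k} of μ, define the rounded set B̂ = {b̂^1, …, b̂^k} by b̂^j_i := min{ q ∈ Q(ε) : q ≥ b^j_i } for all i, j. Then B̂ is a Pareto cover of μ with all coordinates in Q(ε), and E_μ[c_{B̂}] ≤ (1 + 2ε) · E_μ[c_B]. -/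

import Mathlib

open MeasureTheory

/-- `c_B(x) = min { cᵀb^j : j ∈ [k], x ≤ b^j }` for `B = {b^1, …, b^k}`
(with the convention `sInf ∅ = 0`; for a Pareto cover the uncovered points
have measure zero). -/
noncomputable def paretoMin {n k : ℕ} (c : Fin n → ℝ) (b : Fin k → Fin n → ℝ)
    (x : Fin n → ℝ) : ℝ :=
  sInf ((fun j => ∑ i, c i * b j i) '' {j | x ≤ b j})

lemma measurableSet_le_vec {n : ℕ} (v : Fin n → ℝ) :
    MeasurableSet {x : Fin n → ℝ | x ≤ v} := by
  have h : {x : Fin n → ℝ | x ≤ v} = ⋂ i, (fun x : Fin n → ℝ => x i) ⁻¹' Set.Iic (v i) := by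
    ext x; simp [Pi.le_def]
  rw [h]
  exact MeasurableSet.iInter fun i => (measurable_pi_apply i) measurableSet_Iic

lemma measurable_paretoMin {n k : ℕ} (c : Fin n → ℝ) (b : Fin k → Fin n → ℝ) :
    Measurable (paretoMin c b) := by
  classical
  have key : ∀ x, paretoMin c b x = ∑ S : Finset (Fin k),
      Set.indicator {y : Fin n → ℝ | ∀ j, (y ≤ b j ↔ j ∈ S)}
        (fun _ => sInf ((fun j => ∑ i, c i * b j i) '' {j : Fin k | j ∈ S})) x := by
    intro x
    set S₀ : Finset (Fin k) := Finset.univ.filter (fun j => x ≤ b j) with hS₀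
    rw [Finset.sum_eq_single S₀]
    · have hx : x ∈ {y : Fin n → ℝ | ∀ j, (y ≤ b j ↔ j ∈ S₀)} := by
        intro j; simp [hS₀]
      rw [Set.indicator_of_mem hx]
      have hset : {j : Fin k | x ≤ b j} = {j : Fin k | j ∈ S₀} := by
        ext j; simp [hS₀]
      rw [paretoMin, hset]
    · intro S _ hS
      apply Set.indicator_of_notMem
      intro hx
      exact hS (Finset.ext fun j => by simp [hS₀, ← hx j])
    · intro h; exact absurd (Finset.mem_univ S₀) h
  rw [show paretoMin c b = _ from funext key]
  apply Finset.measurable_sum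
  intro S _
  apply Measurable.indicator measurable_const
  have h : {y : Fin n → ℝ | ∀ j, (y ≤ b j ↔ j ∈ S)}
      = ⋂ j, (if j ∈ S then {y : Fin n → ℝ | y ≤ b j} else {y : Fin n → ℝ | y ≤ b j}ᶜ) := by
    ext y
    simp only [Set.mem_iInter, Set.mem_setOf_eq]
    refine forall_congr' fun j => ?_
    by_cases hj : j ∈ S <;> simp [hj]
  rw [h]
  exact MeasurableSet.iInter fun j => by
    by_cases hj : j ∈ S <;> simp only [hj, if_true, if_false]
    · exact measurableSet_le_vec (b j)
    · exact (measurableSet_le_vec (b j)).compl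

lemma paretoMin_nonneg {n k : ℕ} {c : Fin n → ℝ} (hc : ∀ i, 0 ≤ c i)
    {b : Fin k → Fin n → ℝ} (hbnn : ∀ j i, 0 ≤ b j i) (x : Fin n → ℝ) :
    0 ≤ paretoMin c b x := by
  apply Real.sInf_nonneg
  rintro y ⟨j, -, rfl⟩
  exact Finset.sum_nonneg fun i _ => mul_nonneg (hc i) (hbnn j i)

lemma paretoMin_bddBelow {n k : ℕ} {c : Fin n → ℝ} (hc : ∀ i, 0 ≤ c i)
    {b : Fin k → Fin n → ℝ} (hbnn : ∀ j i, 0 ≤ b j i) (x : Fin n → ℝ) :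
    BddBelow ((fun j => ∑ i, c i * b j i) '' {j | x ≤ b j}) := by
  refine ⟨0, ?_⟩
  rintro y ⟨j, -, rfl⟩
  exact Finset.sum_nonneg fun i _ => mul_nonneg (hc i) (hbnn j i)

lemma paretoMin_le {n k : ℕ} {c : Fin n → ℝ} (hc : ∀ i, 0 ≤ c i)
    {b : Fin k → Fin n → ℝ} (hbnn : ∀ j i, 0 ≤ b j i) {x : Fin n → ℝ}
    {j : Fin k} (hj : x ≤ b j) :
    paretoMin c b x ≤ ∑ i, c i * b j i :=
  csInf_le (paretoMin_bddBelow hc hbnn x) ⟨j, hj, rfl⟩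

lemma paretoMin_upper {n k : ℕ} {c : Fin n → ℝ} (hc : ∀ i, 0 ≤ c i)
    {b : Fin k → Fin n → ℝ} (hbnn : ∀ j i, 0 ≤ b j i) (x : Fin n → ℝ) :
    paretoMin c b x ≤ ∑ j, ∑ i, c i * b j i := by
  have hnn : ∀ j : Fin k, 0 ≤ ∑ i, c i * b j i := fun j =>
    Finset.sum_nonneg fun i _ => mul_nonneg (hc i) (hbnn j i)
  by_cases h : {j : Fin k | x ≤ b j}.Nonempty
  · obtain ⟨j, hj⟩ := h
    exact le_trans (paretoMin_le hc hbnn hj)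
      (Finset.single_le_sum (fun j _ => hnn j) (Finset.mem_univ j))
  · rw [Set.not_nonempty_iff_eq_empty] at h
    rw [paretoMin, h]
    simp only [Set.image_empty, Real.sInf_empty]
    exact Finset.sum_nonneg fun j _ => hnn j

lemma paretoMin_integrable {n k : ℕ} (μ : Fin n → Measure ℝ)
    [∀ i, IsProbabilityMeasure (μ i)] {c : Fin n → ℝ} (hc : ∀ i, 0 ≤ c i)
    {b : Fin k → Fin n → ℝ} (hbnn : ∀ j i, 0 ≤ b j i) :
    Integrable (paretoMin c b) (Measure.pi μ) := by
  refine ⟨(measurable_paretoMin c b).aestronglyMeasurable, ?_⟩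
  apply HasFiniteIntegral.of_bounded (C := ∑ j, ∑ i, c i * b j i)
  filter_upwards with x
  rw [Real.norm_eq_abs, abs_of_nonneg (paretoMin_nonneg hc hbnn x)]
  exact paretoMin_upper hc hbnn x
lemma pi_map_eval {n : ℕ} (μ : Fin n → Measure ℝ) [∀ i, IsProbabilityMeasure (μ i)]
    (i : Fin n) : (Measure.pi μ).map (fun x => x i) = μ i := by
  classical
  ext s hs
  rw [Measure.map_apply (measurable_pi_apply i) hs]
  have h : (fun x : Fin n → ℝ => x i) ⁻¹' s
      = Set.univ.pi (Function.update (fun _ => Set.univ) i s) := by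
    ext x
    simp only [Set.mem_preimage, Set.mem_univ_pi, Function.update_apply]
    constructor
    · intro hx j
      split
      · next hji => subst hji; exact hx
      · exact Set.mem_univ _
    · intro hx
      have := hx i
      simpa using this
  rw [h, Measure.pi_pi]
  rw [Finset.prod_eq_single i (fun j _ hj => by simp [Function.update_apply, hj])
    (fun h => absurd (Finset.mem_univ i) h)]
  simp

lemma integral_eval {n : ℕ} (μ : Fin n → Measure ℝ) [∀ i, IsProbabilityMeasure (μ i)]
    (i : Fin n) : ∫ x, x i ∂(Measure.pi μ) = ∫ t, t ∂(μ i) := by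
  rw [← pi_map_eval μ i, integral_map (measurable_pi_apply i).aemeasurable]
  rw [pi_map_eval μ i]
  exact measurable_id.aestronglyMeasurable

lemma integrable_eval {n : ℕ} (μ : Fin n → Measure ℝ) [∀ i, IsProbabilityMeasure (μ i)]
    (hμ : ∀ i, μ i (Set.Icc 0 1) = 1) (i : Fin n) :
    Integrable (fun x : Fin n → ℝ => x i) (Measure.pi μ) := by
  have hae : ∀ᵐ t ∂(μ i), t ∈ Set.Icc (0:ℝ) 1 := by
    rw [ae_iff]
    have : (μ i) (Set.Icc (0:ℝ) 1)ᶜ = 0 := by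
      rw [measure_compl measurableSet_Icc (measure_ne_top _ _), hμ i, measure_univ, tsub_self]
    have h2 : {a : ℝ | ¬a ∈ Set.Icc (0:ℝ) 1} = (Set.Icc (0:ℝ) 1)ᶜ := rfl
    rw [h2, this]
  have hid : Integrable (fun t : ℝ => t) (μ i) := by
    refine ⟨measurable_id.aestronglyMeasurable, ?_⟩
    apply HasFiniteIntegral.of_bounded (C := (1:ℝ))
    filter_upwards [hae] with t ht
    rw [Real.norm_eq_abs, abs_le]
    exact ⟨by linarith [ht.1], ht.2⟩
  have key := integrable_map_measure (μ := Measure.pi μ)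
    (g := fun t : ℝ => t) (f := fun x : Fin n → ℝ => x i)
    (by rw [pi_map_eval μ i]; exact measurable_id.aestronglyMeasurable)
    (measurable_pi_apply i).aemeasurable
  rw [pi_map_eval μ i] at key
  exact key.mp hid

theorem stmt16 {n k : ℕ} (μ : Fin n → Measure ℝ) [∀ i, IsProbabilityMeasure (μ i)]
    (hμ : ∀ i, μ i (Set.Icc 0 1) = 1)
    (α ε : ℝ) (hα : α ∈ Set.Ioo (0:ℝ) 1) (hε : ε ∈ Set.Ioo (0:ℝ) 1)
    (hexp : ∀ i, α ≤ ∫ t in Set.Icc (0:ℝ) 1, t ∂(μ i))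
    (c : Fin n → ℝ) (hc : ∀ i, 0 ≤ c i)
    (b : Fin k → Fin n → ℝ) (hb : ∀ j i, b j i ∈ Set.Icc (0:ℝ) 1)
    (hcover : Measure.pi μ {x | ∃ j, x ≤ b j} = 1)
    (M : ℕ) (hM : M = ⌈Real.logb (1+ε) (ε * α)⁻¹⌉₊)
    (Q : Set ℝ)
    (hQ : Q = {0, 1} ∪ {q | ∃ l : ℕ, 1 ≤ l ∧ l ≤ M ∧ q = ε * α * (1+ε)^(l-1)})
    (bhat : Fin k → Fin n → ℝ)
    (hbhat : ∀ j i, bhat j i = sInf {q ∈ Q | b j i ≤ q}) :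
    Measure.pi μ {x | ∃ j, x ≤ bhat j} = 1 ∧
    (∀ j i, bhat j i ∈ Q) ∧
    ∫ x, paretoMin c bhat x ∂(Measure.pi μ) ≤
      (1 + 2*ε) * ∫ x, paretoMin c b x ∂(Measure.pi μ) := by
  classical
  obtain ⟨hα0, hα1⟩ := hα
  obtain ⟨hε0, hε1⟩ := hε
  have hεα : 0 < ε * α := mul_pos hε0 hα0
  have hεα1 : ε * α < 1 := by nlinarith
  have h1ε : (1:ℝ) < 1 + ε := by linarith
  -- Q is finite, contains 0, 1
  have hQfin : Q.Finite := by
    rw [hQ]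
    refine Set.Finite.union ((Set.finite_singleton (1:ℝ)).insert 0) ?_
    have hsub : {q | ∃ l : ℕ, 1 ≤ l ∧ l ≤ M ∧ q = ε * α * (1+ε)^(l-1)}
        ⊆ (fun l : ℕ => ε * α * (1+ε)^(l-1)) '' (Set.Icc 1 M) := by
      rintro q ⟨l, h1, h2, rfl⟩; exact ⟨l, ⟨h1, h2⟩, rfl⟩
    exact ((Set.finite_Icc 1 M).image _).subset hsub
  have h1Q : (1:ℝ) ∈ Q := by rw [hQ]; left; right; rfl
  have hM1 : 1 ≤ M := by
    rw [hM]
    rw [Nat.one_le_ceil_iff]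
    apply Real.logb_pos h1ε
    rw [one_lt_inv_iff₀]
    exact ⟨hεα, hεα1⟩
  have hεαQ : ε * α ∈ Q := by
    rw [hQ]; right; exact ⟨1, le_refl 1, hM1, by simp⟩
  have hMge : (ε * α)⁻¹ ≤ (1+ε)^M := by
    have hlog : Real.logb (1+ε) (ε * α)⁻¹ ≤ (M : ℝ) := by rw [hM]; exact Nat.le_ceil _
    calc (ε * α)⁻¹ = (1+ε) ^ Real.logb (1+ε) (ε * α)⁻¹ :=
          (Real.rpow_logb (by linarith) (by linarith) (by positivity)).symm
      _ ≤ (1+ε) ^ (M : ℝ) := Real.rpow_le_rpow_of_exponent_le h1ε.le hlog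
      _ = (1+ε)^M := by rw [Real.rpow_natCast]
  have h1le : (1:ℝ) ≤ ε * α * (1+ε)^M := by
    have := mul_le_mul_of_nonneg_left hMge hεα.le
    rwa [mul_inv_cancel₀ hεα.ne'] at this
  -- per-coordinate key facts
  have hkey : ∀ j i, b j i ≤ bhat j i ∧ bhat j i ∈ Q ∧
      bhat j i ≤ (1+ε) * b j i + ε * α := by
    intro j i
    obtain ⟨hb0, hb1⟩ := hb j i
    have hsetfin : {q ∈ Q | b j i ≤ q}.Finite := hQfin.subset (Set.sep_subset _ _)
    have hsetne : {q ∈ Q | b j i ≤ q}.Nonempty := ⟨1, h1Q, hb1⟩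
    have hbdd : BddBelow {q ∈ Q | b j i ≤ q} := hsetfin.bddBelow
    have hmem : bhat j i ∈ {q ∈ Q | b j i ≤ q} := by
      rw [hbhat]; exact hsetne.csInf_mem hsetfin
    refine ⟨hmem.2, hmem.1, ?_⟩
    by_cases ht : b j i ≤ ε * α
    · have : bhat j i ≤ ε * α := by
        rw [hbhat]; exact csInf_le hbdd ⟨hεαQ, ht⟩
      nlinarith
    · push_neg at ht
      have exL : ∃ l : ℕ, b j i ≤ ε * α * (1+ε)^l :=
        ⟨M, le_trans hb1 h1le⟩
      set L := Nat.find exL with hL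
      have hLspec : b j i ≤ ε * α * (1+ε)^L := Nat.find_spec exL
      have hL0 : L ≠ 0 := by
        intro h
        apply ht.not_ge
        have := hLspec; rw [h] at this; simpa using this
      have hLmin : ¬ b j i ≤ ε * α * (1+ε)^(L-1) :=
        Nat.find_min exL (Nat.sub_lt (Nat.pos_of_ne_zero hL0) one_pos)
      push_neg at hLmin
      have hpowgen : ∀ m : ℕ, 1 ≤ m → ε * α * (1+ε)^m = (1+ε) * (ε * α * (1+ε)^(m-1)) := by
        intro m hm
        obtain ⟨p, rfl⟩ : ∃ p, m = p + 1 := ⟨m - 1, (Nat.succ_pred_eq_of_pos hm).symm⟩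
        rw [pow_succ, Nat.add_sub_cancel]; ring
      have hpow : ε * α * (1+ε)^L = (1+ε) * (ε * α * (1+ε)^(L-1)) :=
        hpowgen L (Nat.pos_of_ne_zero hL0)
      by_cases hLM : L + 1 ≤ M
      · have hqQ : ε * α * (1+ε)^L ∈ Q := by
          rw [hQ]; right
          exact ⟨L + 1, Nat.le_add_left 1 L, hLM, by rw [Nat.add_sub_cancel]⟩
        have h1 : bhat j i ≤ ε * α * (1+ε)^L := by
          rw [hbhat]; exact csInf_le hbdd ⟨hqQ, hLspec⟩
        have h2 : ε * α * (1+ε)^L ≤ (1+ε) * b j i := by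
          rw [hpow]
          exact mul_le_mul_of_nonneg_left hLmin.le (by linarith)
        nlinarith
      · push_neg at hLM
        have hML : M ≤ L := by omega
        have hMm1 : M - 1 < L := by omega
        have hMmin : ¬ b j i ≤ ε * α * (1+ε)^(M-1) := Nat.find_min exL hMm1
        push_neg at hMmin
        have hpowM : ε * α * (1+ε)^M = (1+ε) * (ε * α * (1+ε)^(M-1)) := hpowgen M hM1
        have h1 : bhat j i ≤ 1 := by
          rw [hbhat]; exact csInf_le hbdd ⟨h1Q, hb1⟩
        have h2 : (1:ℝ) ≤ (1+ε) * b j i := by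
          calc (1:ℝ) ≤ ε * α * (1+ε)^M := h1le
            _ = (1+ε) * (ε * α * (1+ε)^(M-1)) := hpowM
            _ ≤ (1+ε) * b j i := mul_le_mul_of_nonneg_left hMmin.le (by linarith)
        nlinarith
  have hble : ∀ j, b j ≤ bhat j := fun j i => (hkey j i).1
  have hbhatnn : ∀ j i, 0 ≤ bhat j i := fun j i => le_trans (hb j i).1 (hkey j i).1
  have hbnn : ∀ j i, 0 ≤ b j i := fun j i => (hb j i).1
  -- coverage
  have hsub : {x : Fin n → ℝ | ∃ j, x ≤ b j} ⊆ {x | ∃ j, x ≤ bhat j} := by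
    rintro x ⟨j, hj⟩; exact ⟨j, le_trans hj (hble j)⟩
  have hcover' : Measure.pi μ {x | ∃ j, x ≤ bhat j} = 1 := by
    refine le_antisymm prob_le_one ?_
    rw [← hcover]
    exact measure_mono hsub
  refine ⟨hcover', fun j i => (hkey j i).2.1, ?_⟩
  -- a.e. coverage
  have hScov_meas : MeasurableSet {x : Fin n → ℝ | ∃ j, x ≤ b j} := by
    have h : {x : Fin n → ℝ | ∃ j, x ≤ b j} = ⋃ j, {x | x ≤ b j} := by
      ext x; simp
    rw [h]; exact MeasurableSet.iUnion fun j => measurableSet_le_vec (b j)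
  have hae : ∀ᵐ x ∂(Measure.pi μ), ∃ j, x ≤ b j := by
    rw [ae_iff]
    have h2 : Measure.pi μ {x : Fin n → ℝ | ∃ j, x ≤ b j}ᶜ = 0 := by
      rw [measure_compl hScov_meas (measure_ne_top _ _), hcover, measure_univ, tsub_self]
    have h3 : {x : Fin n → ℝ | ¬∃ j, x ≤ b j} = {x : Fin n → ℝ | ∃ j, x ≤ b j}ᶜ := rfl
    rw [h3, h2]
  -- pointwise comparison
  set d : ℝ := ε * α * ∑ i, c i with hd
  have hdnn : 0 ≤ d := mul_nonneg hεα.le (Finset.sum_nonneg fun i _ => hc i)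
  have hptwise : ∀ x : Fin n → ℝ, (∃ j, x ≤ b j) →
      paretoMin c bhat x ≤ (1+ε) * paretoMin c b x + d := by
    rintro x ⟨j₀, hj₀⟩
    have hne : ((fun j => ∑ i, c i * b j i) '' {j | x ≤ b j}).Nonempty :=
      ⟨_, j₀, hj₀, rfl⟩
    have h1 : ∀ y ∈ (fun j => ∑ i, c i * b j i) '' {j | x ≤ b j},
        (paretoMin c bhat x - d) / (1+ε) ≤ y := by
      rintro y ⟨j, hjx, rfl⟩
      have hx : x ≤ bhat j := le_trans hjx (hble j)
      have h2 : paretoMin c bhat x ≤ ∑ i, c i * bhat j i :=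
        paretoMin_le hc hbhatnn hx
      have h3 : ∑ i, c i * bhat j i ≤ (1+ε) * (∑ i, c i * b j i) + d := by
        have h4 : ∀ i ∈ Finset.univ, c i * bhat j i
            ≤ (1+ε) * (c i * b j i) + c i * (ε * α) := by
          intro i _
          have := mul_le_mul_of_nonneg_left (hkey j i).2.2 (hc i)
          nlinarith [this]
        calc ∑ i, c i * bhat j i
            ≤ ∑ i, ((1+ε) * (c i * b j i) + c i * (ε * α)) := Finset.sum_le_sum h4
          _ = (1+ε) * (∑ i, c i * b j i) + d := by
            rw [Finset.sum_add_distrib, ← Finset.mul_sum, ← Finset.sum_mul, hd]; ring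
      rw [div_le_iff₀ (by linarith : (0:ℝ) < 1+ε)]
      linarith
    have h5 := le_csInf hne h1
    rw [div_le_iff₀ (by linarith : (0:ℝ) < 1+ε)] at h5
    have h6 : paretoMin c bhat x - d ≤ paretoMin c b x * (1+ε) := h5
    linarith
  -- lower bound on paretoMin c b
  have hlow : ∀ x : Fin n → ℝ, (∃ j, x ≤ b j) →
      ∑ i, c i * x i ≤ paretoMin c b x := by
    rintro x ⟨j₀, hj₀⟩
    rw [paretoMin]
    refine le_csInf ⟨_, j₀, hj₀, rfl⟩ ?_
    rintro y ⟨j, hj, rfl⟩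
    exact Finset.sum_le_sum fun i _ => mul_le_mul_of_nonneg_left (hj i) (hc i)
  -- integrability
  have hIg : Integrable (paretoMin c b) (Measure.pi μ) := paretoMin_integrable μ hc hbnn
  have hIf : Integrable (paretoMin c bhat) (Measure.pi μ) := paretoMin_integrable μ hc hbhatnn
  have hIsum : Integrable (fun x : Fin n → ℝ => ∑ i, c i * x i) (Measure.pi μ) := by
    apply integrable_finset_sum
    intro i _
    exact (integrable_eval μ hμ i).const_mul (c i)
  -- α * ∑ c ≤ ∫ paretoMin c b
  have hgint : α * ∑ i, c i ≤ ∫ x, paretoMin c b x ∂(Measure.pi μ) := by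
    have h1 : ∫ x, (∑ i, c i * x i) ∂(Measure.pi μ)
        ≤ ∫ x, paretoMin c b x ∂(Measure.pi μ) := by
      apply integral_mono_ae hIsum hIg
      filter_upwards [hae] with x hx using hlow x hx
    have h2 : ∫ x, (∑ i, c i * x i) ∂(Measure.pi μ) = ∑ i, c i * ∫ t, t ∂(μ i) := by
      rw [integral_finset_sum _ (fun i _ => (integrable_eval μ hμ i).const_mul (c i))]
      congr 1
      ext i
      rw [integral_const_mul, integral_eval μ i]
    have h3 : ∀ i, α ≤ ∫ t, t ∂(μ i) := by
      intro i
      have hcompl : (μ i) (Set.Icc (0:ℝ) 1)ᶜ = 0 := by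
        rw [measure_compl measurableSet_Icc (measure_ne_top _ _), hμ i, measure_univ, tsub_self]
      have haemem : ∀ᵐ t ∂(μ i), t ∈ Set.Icc (0:ℝ) 1 := by
        rw [ae_iff]
        have h4 : {t : ℝ | ¬t ∈ Set.Icc (0:ℝ) 1} = (Set.Icc (0:ℝ) 1)ᶜ := rfl
        rw [h4, hcompl]
      have hres : (μ i).restrict (Set.Icc (0:ℝ) 1) = μ i :=
        Measure.restrict_eq_self_of_ae_mem haemem
      have := hexp i
      rwa [hres] at this
    calc α * ∑ i, c i = ∑ i, c i * α := by
          rw [Finset.mul_sum]; exact Finset.sum_congr rfl fun i _ => mul_comm _ _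
      _ ≤ ∑ i, c i * ∫ t, t ∂(μ i) :=
          Finset.sum_le_sum fun i _ => mul_le_mul_of_nonneg_left (h3 i) (hc i)
      _ = ∫ x, (∑ i, c i * x i) ∂(Measure.pi μ) := h2.symm
      _ ≤ _ := h1
  -- final computation
  have hfinal : ∫ x, paretoMin c bhat x ∂(Measure.pi μ)
      ≤ (1+ε) * ∫ x, paretoMin c b x ∂(Measure.pi μ) + d := by
    have h1 : ∫ x, paretoMin c bhat x ∂(Measure.pi μ)
        ≤ ∫ x, ((1+ε) * paretoMin c b x + d) ∂(Measure.pi μ) := by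
      apply integral_mono_ae hIf ((hIg.const_mul _).add (integrable_const d))
      filter_upwards [hae] with x hx using hptwise x hx
    rw [integral_add (hIg.const_mul _) (integrable_const d), integral_const,
      integral_const_mul] at h1
    simpa using h1
  have hdle : d ≤ ε * ∫ x, paretoMin c b x ∂(Measure.pi μ) := by
    have := mul_le_mul_of_nonneg_left hgint hε0.le
    rw [hd]
    nlinarith [this]
  have hgnn : 0 ≤ ∫ x, paretoMin c b x ∂(Measure.pi μ) :=
    integral_nonneg fun x => paretoMin_nonneg hc hbnn x
  nlinarith [hfinal, hdle]
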